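/- For every positive integer n, ω(n) := 2^{n-1}·∏_{i=1}^{n-1}(2^i - 1)/n! is a positive integer. -/

import Mathlib

def mersenneFact (m : ℕ) : ℕ := ∏ i ∈ Finset.Icc 1 m, (2 ^ i - 1)

def omegaQ (n : ℕ) : ℚ := 2 ^ (n - 1) * (mersenneFact (n - 1) : ℚ) / (n.factorial : ℚ)

lemma digit_sum_pos (p n : ℕ) (hp : 2 ≤ p) (hn : n ≠ 0) : 1 ≤ (p.digits n).sum := by
  rcases Nat.eq_zero_or_pos (p.digits n).sum with h | h
  · exfalso
    apply hn
    have hall : ∀ x ∈ p.digits n, x = 0 := List.sum_eq_zero_iff.mp h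
    have hrep : p.digits n = List.replicate (p.digits n).length 0 :=
      List.eq_replicate_of_mem hall
    have := Nat.ofDigits_digits p n
    rw [← this, hrep]
    generalize (p.digits n).length = L
    induction L with
    | zero => simp [Nat.ofDigits]
    | succ k ih => simp [List.replicate_succ, Nat.ofDigits, ih]
  · exact h

lemma padic_fact_le (p n : ℕ) (hp : p.Prime) (hn : 1 ≤ n) :
    (p - 1) * padicValNat p n.factorial ≤ n - 1 := by
  haveI : Fact p.Prime := ⟨hp⟩
  rw [sub_one_mul_padicValNat_factorial]
  have := digit_sum_pos p n hp.two_le (by omega)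
  omega

lemma mersenneFact_pos (m : ℕ) : 0 < mersenneFact m := by
  apply Finset.prod_pos
  intro i hi
  have : 1 ≤ i := (Finset.mem_Icc.mp hi).1
  have : 2 ≤ 2 ^ i := by
    calc 2 = 2 ^ 1 := rfl
    _ ≤ 2 ^ i := Nat.pow_le_pow_right (by norm_num) this
  omega

lemma key_dvd (n : ℕ) (hn : 1 ≤ n) :
    n.factorial ∣ 2 ^ (n - 1) * mersenneFact (n - 1) := by
  set M := 2 ^ (n - 1) * mersenneFact (n - 1) with hM
  have hMpos : 0 < M := Nat.mul_pos (Nat.pow_pos (by norm_num)) (mersenneFact_pos _)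
  rw [← Nat.factorization_le_iff_dvd (Nat.factorial_ne_zero n) hMpos.ne']
  intro p
  by_cases hp : p.Prime
  swap
  · simp [Nat.factorization_eq_zero_of_not_prime _ hp]
  haveI : Fact p.Prime := ⟨hp⟩
  rw [← Nat.Prime.pow_dvd_iff_le_factorization hp hMpos.ne']
  rcases eq_or_ne p 2 with rfl | hodd
  · -- p = 2
    have h1 : n.factorial.factorization 2 ≤ n - 1 := by
      have := padic_fact_le 2 n hp hn
      rw [Nat.factorization_def _ hp]
      omega
    exact dvd_mul_of_dvd_left (pow_dvd_pow 2 h1) _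
  · -- p odd
    have h2ne : (2 : ZMod p) ≠ 0 := by
      intro h
      have : (p : ℕ) ∣ 2 := by
        have := (ZMod.natCast_eq_zero_iff 2 p).mp (by exact_mod_cast h)
        exact this
      have := (Nat.prime_dvd_prime_iff_eq hp Nat.prime_two).mp this
      exact hodd this
    set d := orderOf (2 : ZMod p) with hd
    have hfin : IsOfFinOrder (2 : ZMod p) :=
      isOfFinOrder_iff_pow_eq_one.mpr
        ⟨p - 1, by have := hp.two_le; omega, ZMod.pow_card_sub_one_eq_one h2ne⟩
    have hdpos : 0 < d := hfin.orderOf_pos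
    have hddvd : d ∣ p - 1 := orderOf_dvd_of_pow_eq_one (ZMod.pow_card_sub_one_eq_one h2ne)
    have hdle : d ≤ p - 1 := Nat.le_of_dvd (by have := hp.two_le; omega) hddvd
    -- p divides 2^i - 1 whenever d ∣ i, i ≥ 1
    have hpdvd : ∀ i, d ∣ i → 1 ≤ i → p ∣ 2 ^ i - 1 := by
      intro i hdi hi
      have h1 : (2 : ZMod p) ^ i = 1 := orderOf_dvd_iff_pow_eq_one.mp hdi
      rw [← ZMod.natCast_eq_zero_iff]
      have h2 : (1 : ℕ) ≤ 2 ^ i := Nat.one_le_two_pow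
      push_cast [h2]
      rw [h1]; ring
    set m := (n - 1) / d with hm
    -- p^m divides mersenneFact (n-1)
    have hpm : p ^ m ∣ mersenneFact (n - 1) := by
      have hsub : Finset.filter (fun x => d ∣ x) (Finset.Ioc 0 (n - 1)) ⊆ Finset.Icc 1 (n - 1) := by
        intro x hx
        simp only [Finset.mem_filter, Finset.mem_Ioc] at hx
        simp [Finset.mem_Icc]; omega
      have hcard : (Finset.filter (fun x => d ∣ x) (Finset.Ioc 0 (n - 1))).card = m :=
        Nat.Ioc_filter_dvd_card_eq_div (n - 1) d
      calc p ^ m = ∏ _i ∈ Finset.filter (fun x => d ∣ x) (Finset.Ioc 0 (n - 1)), p := by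
            rw [Finset.prod_const, hcard]
        _ ∣ ∏ i ∈ Finset.filter (fun x => d ∣ x) (Finset.Ioc 0 (n - 1)), (2 ^ i - 1) := by
            apply Finset.prod_dvd_prod_of_dvd
            intro i hi
            simp only [Finset.mem_filter, Finset.mem_Ioc] at hi
            exact hpdvd i hi.2 hi.1.1
        _ ∣ mersenneFact (n - 1) := Finset.prod_dvd_prod_of_subset _ _ _ hsub
    -- v_p(n!) ≤ m
    have hvle : n.factorial.factorization p ≤ m := by
      rw [Nat.factorization_def _ hp]
      have h1 := padic_fact_le p n hp hn
      have h2 : padicValNat p n.factorial ≤ (n - 1) / (p - 1) :=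
        Nat.le_div_iff_mul_le (by have := hp.two_le; omega) |>.mpr (by linarith [h1])
      calc padicValNat p n.factorial ≤ (n - 1) / (p - 1) := h2
        _ ≤ (n - 1) / d := Nat.div_le_div_left hdle hdpos
    exact dvd_mul_of_dvd_right (dvd_trans (pow_dvd_pow p hvle) hpm) _

theorem omega_is_pos_integer (n : ℕ) (hn : 1 ≤ n) :
    ∃ k : ℕ, 0 < k ∧ omegaQ n = (k : ℚ) := by
  obtain ⟨k, hk⟩ := key_dvd n hn
  have hMpos : 0 < 2 ^ (n - 1) * mersenneFact (n - 1) :=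
    Nat.mul_pos (Nat.pow_pos (by norm_num)) (mersenneFact_pos _)
  have hkpos : 0 < k := by
    rcases Nat.eq_zero_or_pos k with rfl | h
    · rw [mul_zero] at hk; omega
    · exact h
  refine ⟨k, hkpos, ?_⟩
  have hfac : (0 : ℚ) < (n.factorial : ℚ) := by exact_mod_cast n.factorial_pos
  have hq : ((2 ^ (n - 1) * mersenneFact (n - 1) : ℕ) : ℚ) = ((n.factorial * k : ℕ) : ℚ) := by
    exact_mod_cast congrArg (Nat.cast (R := ℚ)) hk
  push_cast at hq
  rw [omegaQ, div_eq_iff hfac.ne']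
  linarith [hq]
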